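/- For every real x, the improper integral (1/π)·∫_0^∞ cos(x·u + u³/3) du converges (i.e. the limit as R → ∞ of ∫_0^R cos(x·u + u³/3) du exists) and equals Ai(x); that is, the function R ↦ ∫_0^R cos(x·u + u³/3) du tends to π·Ai(x) as R → ∞. -/

import Mathlib

open Complex Filter MeasureTheory

/-- The Airy function `Ai`, defined by its Maclaurin series. -/
noncomputable def Ai (z : ℂ) : ℂ :=
  (((1 / ((3 : ℝ) ^ ((2 : ℝ) / 3) * Real.pi)) : ℝ) : ℂ) *
    ∑' n : ℕ,
      ((Real.Gamma ((n + 1) / 3) / n.factorial * Real.sin (2 * (n + 1) * Real.pi / 3) : ℝ) : ℂ) *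
        ((((3 : ℝ) ^ ((1 : ℝ) / 3) : ℝ) : ℂ) * z) ^ n

open Set intervalIntegral

noncomputable def aiw : ℂ := Complex.exp (↑(Real.pi/6) * I)

noncomputable def aiF (x : ℝ) (z : ℂ) : ℂ := Complex.exp (I * (x*z + z^3/3))

lemma aiF_hasDerivAt (x : ℝ) (z : ℂ) :
    HasDerivAt (aiF x) (I*(x + z^2) * aiF x z) z := by
  have h1 : HasDerivAt (fun z : ℂ => I * ((x:ℂ)*z + z^3/3)) (I*((x:ℂ) + z^2)) z := by
    have := (((hasDerivAt_id z).const_mul (x:ℂ)).add ((hasDerivAt_pow 3 z).div_const 3)).const_mul I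
    refine this.congr_deriv ?_
    push_cast
    ring
  have := h1.cexp
  refine this.congr_deriv ?_
  unfold aiF
  ring

lemma HasDerivAt.comp_path {f : ℂ → ℂ} {a z : ℂ} (hf : HasDerivAt f a z)
    {c : ℝ → ℂ} {c' : ℂ} {t : ℝ} (hc : HasDerivAt c c' t) (h : c t = z) :
    HasDerivAt (fun s => f (c s)) (c' * a) t := by
  subst h
  have := (hf.hasFDerivAt.restrictScalars ℝ).comp_hasDerivAt t hc
  exact this.congr_deriv (by simp [mul_comm])

lemma aiF_continuous (x : ℝ) : Continuous (aiF x) := by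
  unfold aiF; fun_prop

lemma aiF_norm_le (x : ℝ) (z : ℂ) :
    ‖aiF x z‖ ≤ Real.exp (|x| * ‖z‖ + ‖z‖^3/3) := by
  unfold aiF
  rw [Complex.norm_exp]
  apply Real.exp_le_exp.2
  calc (I*(x*z+z^3/3)).re ≤ ‖I*(x*z+z^3/3)‖ := Complex.re_le_norm _
    _ ≤ ‖(x:ℂ)*z‖ + ‖z^3/3‖ := by
        rw [norm_mul, Complex.norm_I, one_mul]; exact norm_add_le _ _
    _ ≤ |x| * ‖z‖ + ‖z‖^3/3 := by
        rw [norm_mul, norm_div, norm_pow, Complex.norm_real, Real.norm_eq_abs]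
        norm_num

noncomputable def aiArc (x R : ℝ) : ℂ :=
  ∫ θ in (0:ℝ)..(Real.pi/6), (I * R * Complex.exp (θ*I)) * aiF x (R * Complex.exp (θ*I))

lemma aiArc_hasDerivAt (x R₀ : ℝ) :
    HasDerivAt (aiArc x) (aiw * aiF x (R₀*aiw) - aiF x R₀) R₀ := by
  set F' : ℝ → ℝ → ℂ := fun r θ =>
    I*Complex.exp (θ*I) * (aiF x (r*Complex.exp (θ*I)) +
      (r*Complex.exp (θ*I)) * (I*(x + (r*Complex.exp (θ*I))^2) * aiF x (r*Complex.exp (θ*I))))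
    with hF'
  set M : ℝ := |R₀| + 1 with hM
  have hnorm : ∀ (r θ : ℝ), ‖(r:ℂ) * Complex.exp (θ*I)‖ = |r| := by
    intro r θ
    rw [norm_mul, Complex.norm_real, Real.norm_eq_abs,
      Complex.norm_exp_ofReal_mul_I, mul_one]
  have key : ∀ r ∈ Metric.ball R₀ 1, ∀ θ : ℝ,
      ‖F' r θ‖ ≤ (1 + M*(|x| + M^2)) * Real.exp (|x| * M + M^3/3) := by
    intro r hr θ
    have hrM : |r| ≤ M := by
      have h := Metric.mem_ball.1 hr
      rw [Real.dist_eq] at h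
      have := abs_sub_abs_le_abs_sub r R₀
      rw [hM]; linarith
    have hM0 : (0:ℝ) ≤ M := (abs_nonneg r).trans hrM
    set z := (r:ℂ) * Complex.exp (θ*I) with hz
    have hzn : ‖z‖ = |r| := hnorm r θ
    have hfb : ‖aiF x z‖ ≤ Real.exp (|x| * M + M^3/3) := by
      refine (aiF_norm_le x z).trans (Real.exp_le_exp.2 ?_)
      rw [hzn]
      have h0 : (0:ℝ) ≤ |r| := abs_nonneg r
      have h0x : (0:ℝ) ≤ |x| := abs_nonneg x
      gcongr
    have hf0 : (0:ℝ) ≤ ‖aiF x z‖ := norm_nonneg _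
    have h1 : ‖I*Complex.exp (θ*I)‖ = 1 := by
      rw [norm_mul, Complex.norm_I, one_mul,
        Complex.norm_exp_ofReal_mul_I]
    have hxz : ‖I * ((x:ℂ) + z^2)‖ ≤ |x| + M^2 := by
      rw [norm_mul, Complex.norm_I, one_mul]
      refine (norm_add_le _ _).trans ?_
      rw [Complex.norm_real, Real.norm_eq_abs, norm_pow, hzn]
      have h0 : (0:ℝ) ≤ |r| := abs_nonneg r
      nlinarith
    have h2 : ‖aiF x z + z * (I*((x:ℂ)+z^2) * aiF x z)‖
        ≤ ‖aiF x z‖ + |r| * ((|x|+M^2) * ‖aiF x z‖) := by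
      refine (norm_add_le _ _).trans ?_
      rw [norm_mul, norm_mul, norm_mul, Complex.norm_real, Real.norm_eq_abs,
        Complex.norm_exp_ofReal_mul_I, mul_one]
      gcongr
    have h0x : (0:ℝ) ≤ |x| := abs_nonneg x
    have hra := mul_le_mul hrM hfb hf0 hM0
    rw [hF']
    calc ‖I*Complex.exp (θ*I) * (aiF x z + z * (I*((x:ℂ) + z^2) * aiF x z))‖
        = ‖aiF x z + z * (I*((x:ℂ) + z^2) * aiF x z)‖ := by rw [norm_mul, h1, one_mul]
      _ ≤ ‖aiF x z‖ + |r| * ((|x|+M^2) * ‖aiF x z‖) := h2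
      _ ≤ (1 + M*(|x| + M^2)) * Real.exp (|x| * M + M^3/3) := by
          nlinarith [hra, mul_le_mul_of_nonneg_left hra
            (by positivity : (0:ℝ) ≤ |x| + M^2)]
  have hdiff : ∀ (θ : ℝ), ∀ r : ℝ, HasDerivAt
      (fun r : ℝ => (I * (r:ℂ) * Complex.exp ((θ:ℂ)*I)) * aiF x ((r:ℂ) * Complex.exp ((θ:ℂ)*I)))
      (F' r θ) r := by
    intro θ r
    have path : HasDerivAt (fun r:ℝ => (r:ℂ) * Complex.exp ((θ:ℂ)*I)) (Complex.exp ((θ:ℂ)*I)) r := by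
      simpa using ((hasDerivAt_id ((r:ℝ):ℂ)).mul_const (Complex.exp ((θ:ℂ)*I))).comp_ofReal
    have hcomp := (aiF_hasDerivAt x ((r:ℂ) * Complex.exp ((θ:ℂ)*I))).comp_path path rfl
    have hlin : HasDerivAt (fun r:ℝ => I * (r:ℂ) * Complex.exp ((θ:ℂ)*I))
        (I * Complex.exp ((θ:ℂ)*I)) r := by
      simpa [mul_assoc] using
        (((hasDerivAt_id ((r:ℝ):ℂ)).const_mul I).mul_const (Complex.exp ((θ:ℂ)*I))).comp_ofReal
    have := hlin.mul hcomp
    refine this.congr_deriv ?_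
    rw [hF']; ring
  have contF : ∀ r : ℝ, Continuous fun θ : ℝ =>
      (I * (r:ℂ) * Complex.exp ((θ:ℂ)*I)) * aiF x ((r:ℂ) * Complex.exp ((θ:ℂ)*I)) := by
    intro r; simp only [aiF]; fun_prop
  have contF' : Continuous (F' R₀) := by
    rw [hF']; simp only [aiF]; fun_prop
  have main := intervalIntegral.hasDerivAt_integral_of_dominated_loc_of_deriv_le
      (F := fun (r : ℝ) (θ : ℝ) =>
        (I * (r:ℂ) * Complex.exp ((θ:ℂ)*I)) * aiF x ((r:ℂ) * Complex.exp ((θ:ℂ)*I)))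
      (F' := F') (x₀ := R₀) (a := 0) (b := Real.pi/6) (μ := MeasureTheory.volume)
      (bound := fun _ => (1 + M*(|x| + M^2)) * Real.exp (|x| * M + M^3/3))
      (Metric.ball_mem_nhds R₀ one_pos)
      (Filter.Eventually.of_forall fun r => ((contF r).aestronglyMeasurable).restrict)
      ((contF R₀).intervalIntegrable _ _)
      (contF'.aestronglyMeasurable.restrict)
      (Filter.Eventually.of_forall fun θ _ r hr => key r hr θ)
      (intervalIntegrable_const)
      (Filter.Eventually.of_forall fun θ _ r _ => hdiff θ r)
  have hG : ∀ θ : ℝ, HasDerivAt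
      (fun θ:ℝ => Complex.exp ((θ:ℂ)*I) * aiF x ((R₀:ℂ) * Complex.exp ((θ:ℂ)*I))) (F' R₀ θ) θ := by
    intro θ
    have pathθ : HasDerivAt (fun θ:ℝ => Complex.exp ((θ:ℂ)*I)) (I * Complex.exp ((θ:ℂ)*I)) θ := by
      simpa [mul_comm] using (((hasDerivAt_id ((θ:ℝ):ℂ)).mul_const I).cexp).comp_ofReal
    have path2 := HasDerivAt.const_mul ((R₀:ℂ)) pathθ
    have hcomp := (aiF_hasDerivAt x ((R₀:ℂ) * Complex.exp ((θ:ℂ)*I))).comp_path path2 rfl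
    have := pathθ.mul hcomp
    refine this.congr_deriv ?_
    rw [hF']; ring
  have hval : (∫ θ in (0:ℝ)..(Real.pi/6), F' R₀ θ) = aiw * aiF x (R₀*aiw) - aiF x R₀ := by
    rw [intervalIntegral.integral_eq_sub_of_hasDerivAt (fun θ _ => hG θ)
      (contF'.intervalIntegrable _ _)]
    simp [aiw]
  exact hval ▸ main.2

lemma aiContour (x R : ℝ) :
    (∫ t in (0:ℝ)..R, aiF x t) = (∫ t in (0:ℝ)..R, aiw * aiF x (↑t * aiw)) - aiArc x R := by
  have hc1 : Continuous (fun t : ℝ => aiF x ↑t) := (aiF_continuous x).comp Complex.continuous_ofReal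
  have hc2 : Continuous (fun t : ℝ => aiw * aiF x (↑t * aiw)) := by
    simp only [aiF]; fun_prop
  set g : ℝ → ℂ := fun R =>
    (∫ t in (0:ℝ)..R, aiF x t) + aiArc x R - ∫ t in (0:ℝ)..R, aiw * aiF x (↑t * aiw) with hg
  have hder : ∀ R : ℝ, HasDerivAt g 0 R := by
    intro R
    have h1 : HasDerivAt (fun R : ℝ => ∫ t in (0:ℝ)..R, aiF x t) (aiF x R) R :=
      intervalIntegral.integral_hasDerivAt_right (hc1.intervalIntegrable _ _)
        (hc1.stronglyMeasurableAtFilter _ _) hc1.continuousAt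
    have h2 : HasDerivAt (fun R : ℝ => ∫ t in (0:ℝ)..R, aiw * aiF x (↑t * aiw))
        (aiw * aiF x (↑R * aiw)) R :=
      intervalIntegral.integral_hasDerivAt_right (hc2.intervalIntegrable _ _)
        (hc2.stronglyMeasurableAtFilter _ _) hc2.continuousAt
    have h3 := aiArc_hasDerivAt x R
    have := (h1.add h3).sub h2
    refine this.congr_deriv ?_
    ring
  have hconst : g R = g 0 :=
    is_const_of_deriv_eq_zero (fun r => (hder r).differentiableAt) (fun r => (hder r).deriv) R 0
  have h0 : g 0 = 0 := by
    have : aiArc x 0 = 0 := by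
      simp [aiArc]
    simp [hg, this]
  have key : (∫ t in (0:ℝ)..R, aiF x t) + aiArc x R
      - (∫ t in (0:ℝ)..R, aiw * aiF x (↑t * aiw)) = 0 := hconst.trans h0
  linear_combination key

lemma aiExpInt (a : ℝ) : IntegrableOn (fun t : ℝ => Real.exp (a*t - t^3/3)) (Ioi 0) := by
  apply integrable_of_isBigO_exp_neg (by norm_num : (0:ℝ) < 1) (by fun_prop)
  rw [Asymptotics.isBigO_iff]
  refine ⟨1, ?_⟩
  filter_upwards [eventually_ge_atTop (3*(|a|+1))] with t ht
  have ha : a ≤ |a| := le_abs_self a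
  have ht0 : (0:ℝ) ≤ t := le_trans (by positivity) ht
  rw [Real.norm_eq_abs, Real.norm_eq_abs, Real.abs_exp, Real.abs_exp, one_mul,
    Real.exp_le_exp]
  have h1 : 3*(|a|+1)*t ≤ t^2 := by nlinarith [abs_nonneg a]
  have h2 : 3*(|a|+1)*t^2 ≤ t^3 := by nlinarith [abs_nonneg a, sq_nonneg t]
  nlinarith [abs_nonneg a]

noncomputable def aiG (x t : ℝ) : ℂ := Complex.exp (I*x*aiw*t - (t:ℂ)^3/3)

lemma aiG_norm_le (x t : ℝ) : ‖aiG x t‖ ≤ Real.exp (|x| * |t| - t^3/3) := by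
  unfold aiG
  rw [Complex.norm_exp, Real.exp_le_exp]
  have h1 : (I*x*aiw*t - (t:ℂ)^3/3).re = (I*↑x*aiw*↑t).re - t^3/3 := by
    simp [Complex.sub_re, Complex.div_re, ← Complex.ofReal_pow]
  rw [h1]
  have h2 : (I*↑x*aiw*(t:ℂ)).re ≤ |x| * |t| := by
    refine (Complex.re_le_norm _).trans ?_
    rw [norm_mul, norm_mul, norm_mul, Complex.norm_I, one_mul, Complex.norm_real, Real.norm_eq_abs,
      aiw, Complex.norm_exp_ofReal_mul_I, mul_one, Complex.norm_real, Real.norm_eq_abs]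
  linarith

lemma aiG_cont (x : ℝ) : Continuous (aiG x) := by unfold aiG; fun_prop

lemma aiG_integrable (x : ℝ) : IntegrableOn (aiG x) (Ioi 0) := by
  refine Integrable.mono (aiExpInt |x|) ((aiG_cont x).aestronglyMeasurable.restrict) ?_
  refine (ae_restrict_iff' measurableSet_Ioi).2 (Filter.Eventually.of_forall fun t ht => ?_)
  rw [Real.norm_eq_abs, Real.abs_exp]
  refine (aiG_norm_le x t).trans (Real.exp_le_exp.2 ?_)
  rw [abs_of_pos (mem_Ioi.1 ht)]

lemma aiw_cube : aiw^3 = I := by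
  rw [aiw, ← Complex.exp_nat_mul]
  have : ((3:ℕ):ℂ) * (↑(Real.pi/6) * I) = ↑(Real.pi/2) * I := by
    push_cast; ring
  rw [this, Complex.exp_mul_I]
  simp [← Complex.ofReal_cos, ← Complex.ofReal_sin]

lemma aiFG (x t : ℝ) : aiw * aiF x (↑t * aiw) = aiw * aiG x t := by
  unfold aiF aiG
  congr 1
  have h3 : ((t:ℂ) * aiw)^3 = (t:ℂ)^3 * I := by rw [mul_pow, aiw_cube]
  rw [mul_pow, aiw_cube]
  ring_nf
  rw [Complex.I_sq]
  ring

lemma seg2_tendsto (x : ℝ) :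
    Tendsto (fun R : ℝ => ∫ t in (0:ℝ)..R, aiw * aiF x (↑t * aiw)) atTop
      (nhds (aiw * ∫ t in Ioi (0:ℝ), aiG x t)) := by
  have h1 : ∀ R : ℝ, (∫ t in (0:ℝ)..R, aiw * aiF x (↑t * aiw)) =
      ∫ t in (0:ℝ)..R, aiw * aiG x t := by
    intro R; exact intervalIntegral.integral_congr fun t _ => aiFG x t
  simp only [h1]
  rw [← MeasureTheory.integral_const_mul]
  exact MeasureTheory.intervalIntegral_tendsto_integral_Ioi 0
    ((aiG_integrable x).const_mul aiw) tendsto_id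

lemma exp_decay_int {c b : ℝ} (hc : 0 < c) (hb : 0 ≤ b) :
    (∫ θ in (0:ℝ)..b, Real.exp (-(c*θ))) ≤ 1/c := by
  have hd : ∀ θ:ℝ, HasDerivAt (fun θ : ℝ => -(Real.exp (-(c*θ))/c)) (Real.exp (-(c*θ))) θ := by
    intro θ
    have h1 : HasDerivAt (fun θ : ℝ => -(c*θ)) (-c) θ := by
      exact ((hasDerivAt_id θ).const_mul c).neg.congr_deriv (by simp)
    have h2 := (h1.exp.div_const c).neg
    have h3 : -(Real.exp (-(c*θ)) * -c / c) = Real.exp (-(c*θ)) := by field_simp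
    rw [← h3]
    exact h2
  rw [intervalIntegral.integral_eq_sub_of_hasDerivAt (fun θ _ => hd θ)
    (Continuous.intervalIntegrable (by fun_prop) _ _)]
  have h4 : -(Real.exp (-(c*b))/c) - -(Real.exp (-(c*(0:ℝ)))/c)
      = (1 - Real.exp (-(c*b)))/c := by
    rw [show -(c*(0:ℝ)) = 0 by ring, Real.exp_zero]
    field_simp
    ring
  rw [h4, div_le_div_iff_of_pos_right hc]
  nlinarith [Real.exp_pos (-(c*b))]

lemma aiArc_norm_le (x : ℝ) {R : ℝ} (hR1 : 1 ≤ R) (hR2 : Real.pi*(|x|+1) ≤ R) :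
    ‖aiArc x R‖ ≤ 1/R := by
  have hπ := Real.pi_pos
  have hR0 : 0 < R := lt_of_lt_of_le one_pos hR1
  have key : ∀ θ ∈ Set.uIoc (0:ℝ) (Real.pi/6),
      ‖(I * (R:ℂ) * Complex.exp ((θ:ℂ)*I)) * aiF x ((R:ℂ) * Complex.exp ((θ:ℂ)*I))‖
        ≤ R * Real.exp (-(R^2*θ)) := by
    intro θ hθ
    rw [Set.uIoc_of_le (by positivity)] at hθ
    obtain ⟨hθ0, hθ6⟩ := hθ
    have hθ0' : 0 ≤ θ := le_of_lt hθ0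
    set z : ℂ := (R:ℂ) * Complex.exp ((θ:ℂ)*I) with hzdef
    have hexp : ∀ a : ℝ, Complex.exp ((a:ℂ)*I) = ↑(Real.cos a) + ↑(Real.sin a)*I := fun a => by
      rw [Complex.exp_mul_I, Complex.ofReal_cos, Complex.ofReal_sin]
    have hz3 : z^3/3 = ((R^3/3 : ℝ) : ℂ) * Complex.exp ((↑(3*θ))*I) := by
      rw [hzdef, mul_pow, ← Complex.exp_nat_mul]
      push_cast
      ring
    have hgoal : I*((x:ℂ)*z + z^3/3) = ((-(x*(R*Real.sin θ)) - R^3*Real.sin (3*θ)/3 : ℝ) : ℂ)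
        + ((x*(R*Real.cos θ) + R^3*Real.cos (3*θ)/3 : ℝ) : ℂ)*I := by
      rw [mul_add, hz3, hexp (3*θ)]
      rw [hzdef, hexp θ]
      apply Complex.ext <;>
        simp [Complex.mul_re, Complex.mul_im, Complex.add_re, Complex.add_im] <;> ring
    have hre : (I*((x:ℂ)*z + z^3/3)).re = -(x*(R*Real.sin θ)) - R^3*Real.sin (3*θ)/3 := by
      rw [hgoal, Complex.add_re, Complex.ofReal_re, Complex.mul_re, Complex.ofReal_re,
        Complex.ofReal_im, Complex.I_re, Complex.I_im]
      ring
    have hnf : ‖aiF x z‖ = Real.exp (-(x*(R*Real.sin θ)) - R^3*Real.sin (3*θ)/3) := by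
      rw [aiF, Complex.norm_exp, hre]
    have hsin1 : Real.sin θ ≤ θ := Real.sin_le hθ0'
    have hsin0 : 0 ≤ Real.sin θ := Real.sin_nonneg_of_nonneg_of_le_pi hθ0' (by linarith)
    have hsin3 : 2/Real.pi * (3*θ) ≤ Real.sin (3*θ) :=
      Real.mul_le_sin (by linarith) (by linarith)
    have hexpo : -(x*(R*Real.sin θ)) - R^3*Real.sin (3*θ)/3 ≤ -(R^2*θ) := by
      have hax : -x ≤ |x| := neg_le_abs x
      have hrs : R*Real.sin θ ≤ R*θ := by nlinarith
      have h1 : -(x*(R*Real.sin θ)) ≤ |x| * R * θ := by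
        nlinarith [mul_le_mul_of_nonneg_right hax (mul_nonneg hR0.le hsin0),
          mul_le_mul_of_nonneg_left hrs (abs_nonneg x)]
      have h2 : 2*R^3*θ/Real.pi ≤ R^3*Real.sin (3*θ)/3 := by
        have h2' := mul_le_mul_of_nonneg_left hsin3 (by positivity : (0:ℝ) ≤ R^3/3)
        calc 2*R^3*θ/Real.pi = R^3/3 * (2/Real.pi*(3*θ)) := by field_simp
          _ ≤ R^3/3 * Real.sin (3*θ) := h2'
          _ = R^3*Real.sin (3*θ)/3 := by ring
      have h6 : (|x| * R + R^2) * Real.pi ≤ 2*R^3 := by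
        nlinarith [abs_nonneg x, mul_le_mul_of_nonneg_left hR2
          (mul_nonneg (mul_nonneg (by norm_num : (0:ℝ) ≤ 2) hR0.le) hR0.le),
          mul_nonneg (mul_nonneg hπ.le (abs_nonneg x)) (mul_nonneg hR0.le hR0.le),
          sq_nonneg (R - 1), mul_pos hR0 hR0, mul_pos (mul_pos hR0 hR0) hR0]
      have h7 : |x| * R * θ + R^2*θ ≤ 2*R^3*θ/Real.pi := by
        rw [le_div_iff₀ hπ]
        calc (|x| * R * θ + R^2*θ)*Real.pi = ((|x| * R + R^2)*Real.pi)*θ := by ring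
          _ ≤ (2*R^3)*θ := mul_le_mul_of_nonneg_right h6 hθ0'
          _ = 2*R^3*θ := by ring
      linarith
    have hro : ‖I * (R:ℂ) * Complex.exp ((θ:ℂ)*I)‖ = R := by
      rw [norm_mul, norm_mul, Complex.norm_I, one_mul,
        Complex.norm_real, Real.norm_eq_abs, abs_of_pos hR0,
        Complex.norm_exp_ofReal_mul_I, mul_one]
    rw [norm_mul, hro, hnf]
    exact mul_le_mul_of_nonneg_left (Real.exp_le_exp.2 hexpo) hR0.le
  have hb : IntervalIntegrable (fun θ : ℝ => R * Real.exp (-(R^2*θ)))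
      MeasureTheory.volume 0 (Real.pi/6) := Continuous.intervalIntegrable (by fun_prop) _ _
  have hle := intervalIntegral.norm_integral_le_abs_of_norm_le
      (f := fun θ : ℝ => (I * (R:ℂ) * Complex.exp ((θ:ℂ)*I)) * aiF x ((R:ℂ) * Complex.exp ((θ:ℂ)*I)))
      ((MeasureTheory.ae_restrict_iff' measurableSet_uIoc).2
        (Filter.Eventually.of_forall key)) hb
  refine le_trans hle ?_
  rw [intervalIntegral.integral_const_mul, abs_mul, abs_of_pos hR0]
  have hdec := exp_decay_int (c := R^2) (b := Real.pi/6) (by positivity) (by positivity)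
  have hnn : (0:ℝ) ≤ ∫ θ in (0:ℝ)..(Real.pi/6), Real.exp (-(R^2*θ)) := by
    apply intervalIntegral.integral_nonneg (by positivity)
    intro u _; positivity
  rw [_root_.abs_of_nonneg hnn]
  calc R * ∫ θ in (0:ℝ)..(Real.pi/6), Real.exp (-(R^2*θ)) ≤ R * (1/R^2) :=
        mul_le_mul_of_nonneg_left hdec hR0.le
    _ = 1/R := by field_simp

lemma aiArc_tendsto (x : ℝ) : Tendsto (aiArc x) atTop (nhds 0) := by
  have h : Tendsto (fun R : ℝ => 1/R) atTop (nhds 0) := by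
    simpa [one_div] using tendsto_inv_atTop_zero
  apply squeeze_zero_norm' ?_ h
  filter_upwards [eventually_ge_atTop (1:ℝ), eventually_ge_atTop (Real.pi*(|x|+1))]
    with R h1 h2
  exact aiArc_norm_le x h1 h2

lemma seg1_tendsto (x : ℝ) : Tendsto (fun R : ℝ => ∫ t in (0:ℝ)..R, aiF x t) atTop
    (nhds (aiw * ∫ t in Ioi (0:ℝ), aiG x t)) := by
  have h := (seg2_tendsto x).sub (aiArc_tendsto x)
  rw [sub_zero] at h
  exact h.congr fun R => (aiContour x R).symm

lemma aiK (n : ℕ) : (∫ t in Ioi (0:ℝ), t^n * Real.exp (-(t^3)/3))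
    = 3^(((n:ℝ)-2)/3) * Real.Gamma (((n:ℝ)+1)/3) := by
  have hn : (-1:ℝ) < (n:ℝ) := by
    have := Nat.cast_nonneg (α := ℝ) n; linarith
  have h := integral_rpow_mul_exp_neg_mul_rpow (p:=3) (q:=(n:ℝ)) (b:=1/3)
    (by norm_num) hn (by norm_num)
  have hcongr : (∫ t in Ioi (0:ℝ), t^n * Real.exp (-(t^3)/3))
      = ∫ t in Ioi (0:ℝ), t^((n:ℝ)) * Real.exp (-(1/3)*t^((3:ℝ))) := by
    refine MeasureTheory.setIntegral_congr_fun measurableSet_Ioi fun t ht => ?_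
    have ht0 : (0:ℝ) ≤ t := le_of_lt ht
    rw [Real.rpow_natCast, show (3:ℝ) = ((3:ℕ):ℝ) by norm_num, Real.rpow_natCast]
    ring_nf
  rw [hcongr, h]
  rw [show (-((n:ℝ)+1)/3) = -(((n:ℝ)+1)/3) by ring]
  rw [show (1/3 : ℝ) = 3⁻¹ by norm_num, Real.inv_rpow (by norm_num), ← Real.rpow_neg (by norm_num)]
  rw [show ((n:ℝ)-2)/3 = -(-(((n:ℝ)+1)/3)) - 1 by ring, Real.rpow_sub (by norm_num), Real.rpow_one]
  ring

lemma aiPolyInt (n : ℕ) : IntegrableOn (fun t : ℝ => t^n * Real.exp (-(t^3)/3)) (Ioi 0) := by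
  apply integrable_of_isBigO_exp_neg (by norm_num : (0:ℝ) < 1) (by fun_prop)
  rw [Asymptotics.isBigO_iff]
  refine ⟨1, ?_⟩
  filter_upwards [eventually_ge_atTop (3*((n:ℝ)+1))] with t ht
  have hn0 : (0:ℝ) ≤ (n:ℝ) := Nat.cast_nonneg n
  have ht0 : (0:ℝ) ≤ t := le_trans (by positivity) ht
  have htn : t^n ≤ Real.exp ((n:ℝ)*t) := by
    calc t^n ≤ (Real.exp t)^n :=
          pow_le_pow_left₀ ht0 (by linarith [Real.add_one_le_exp t]) n
      _ = Real.exp ((n:ℝ)*t) := by rw [← Real.exp_nat_mul]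
  have h1 : 3*((n:ℝ)+1)*t ≤ t^2 := by nlinarith
  have h2 : 3*((n:ℝ)+1)*t^2 ≤ t^3 := by nlinarith [sq_nonneg t]
  rw [Real.norm_eq_abs, Real.norm_eq_abs, Real.abs_exp, _root_.abs_of_nonneg
    (by positivity : (0:ℝ) ≤ t^n * Real.exp (-(t^3)/3)), one_mul]
  calc t^n * Real.exp (-(t^3)/3) ≤ Real.exp ((n:ℝ)*t) * Real.exp (-(t^3)/3) := by
        apply mul_le_mul_of_nonneg_right htn (Real.exp_pos _).le
    _ = Real.exp ((n:ℝ)*t - t^3/3) := by rw [← Real.exp_add]; ring_nf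
    _ ≤ Real.exp (-t) := Real.exp_le_exp.2 (by nlinarith)
    _ = Real.exp (-1*t) := by ring_nf

lemma aiJ_hasSum (x : ℝ) :
    HasSum (fun n : ℕ => (I*(x:ℂ)*aiw)^n/(n.factorial : ℂ) *
      ((3^(((n:ℝ)-2)/3) * Real.Gamma (((n:ℝ)+1)/3) : ℝ) : ℂ))
      (∫ t in Ioi (0:ℝ), aiG x t) := by
  set μ := MeasureTheory.volume.restrict (Ioi (0:ℝ)) with hμ
  set F : ℕ → ℝ → ℂ := fun n t =>
    (I*(x:ℂ)*aiw*t)^n/(n.factorial : ℂ) * Complex.exp (-(t:ℂ)^3/3) with hF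
  have hFeq : ∀ (n : ℕ) (t : ℝ), F n t =
      (I*(x:ℂ)*aiw)^n/(n.factorial:ℂ) * ((t^n * Real.exp (-(t^3)/3) : ℝ) : ℂ) := by
    intro n t
    rw [hF]
    push_cast
    rw [mul_pow]
    ring_nf
  have hμint : ∀ n, Integrable (F n) μ := by
    intro n
    have he : F n = fun t : ℝ => (I*(x:ℂ)*aiw)^n/(n.factorial:ℂ) *
        ((t^n * Real.exp (-(t^3)/3) : ℝ) : ℂ) := funext (hFeq n)
    rw [he]
    exact ((aiPolyInt n).ofReal (𝕜 := ℂ)).const_mul _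
  have hnorm : ∀ (n : ℕ), ∀ t ∈ Ioi (0:ℝ), ‖F n t‖
      = (|x| * t)^n/(n.factorial : ℝ) * Real.exp (-(t^3)/3) := by
    intro n t ht
    rw [hF]
    rw [norm_mul, norm_div, norm_pow]
    have h1 : ‖I*(x:ℂ)*aiw*(t:ℂ)‖ = |x| * t := by
      rw [norm_mul, norm_mul, norm_mul, Complex.norm_I, one_mul,
        Complex.norm_real, Real.norm_eq_abs, aiw,
        Complex.norm_exp_ofReal_mul_I, mul_one, Complex.norm_real, Real.norm_eq_abs,
        abs_of_pos (mem_Ioi.1 ht)]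
    have h2 : ‖Complex.exp (-(t:ℂ)^3/3)‖ = Real.exp (-(t^3)/3) := by
      rw [show (-(t:ℂ)^3/3) = ((-(t^3)/3 : ℝ) : ℂ) by push_cast; ring, ← Complex.ofReal_exp,
        Complex.norm_real, Real.norm_eq_abs, Real.abs_exp]
    rw [h1, h2, Complex.norm_natCast]
  have hsum : Summable (fun n => ∫ t, ‖F n t‖ ∂μ) := by
    apply summable_of_sum_range_le
      (c := ∫ t in Ioi (0:ℝ), Real.exp (|x| * t - t^3/3))
      (fun n => MeasureTheory.integral_nonneg fun t => norm_nonneg _)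
    intro N
    rw [← MeasureTheory.integral_finset_sum _ (fun i _ => (hμint i).norm)]
    apply MeasureTheory.integral_mono_ae
      (MeasureTheory.integrable_finset_sum _ (fun i _ => (hμint i).norm))
      (aiExpInt |x|)
    rw [hμ]
    refine (ae_restrict_iff' measurableSet_Ioi).2 (Filter.Eventually.of_forall fun t ht => ?_)
    have ht0 : 0 < t := mem_Ioi.1 ht
    calc (∑ i ∈ Finset.range N, ‖F i t‖)
        = (∑ i ∈ Finset.range N, (|x| * t)^i/(i.factorial : ℝ)) * Real.exp (-(t^3)/3) := by
          rw [Finset.sum_mul]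
          exact Finset.sum_congr rfl fun i _ => hnorm i t ht
      _ ≤ Real.exp (|x| * t) * Real.exp (-(t^3)/3) := by
          apply mul_le_mul_of_nonneg_right _ (Real.exp_pos _).le
          exact Real.sum_le_exp_of_nonneg (by positivity) N
      _ = Real.exp (|x| * t - t^3/3) := by rw [← Real.exp_add]; ring_nf
  have hs2 := hasSum_integral_of_summable_integral_norm hμint hsum
  have htsum : ∀ t : ℝ, (∑' n, F n t) = aiG x t := by
    intro t
    have h := (NormedSpace.expSeries_div_hasSum_exp
      (I*(x:ℂ)*aiw*t)).mul_right (Complex.exp (-(t:ℂ)^3/3))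
    rw [← Complex.exp_eq_exp_ℂ] at h
    rw [h.tsum_eq, ← Complex.exp_add, aiG, sub_eq_add_neg]
    congr 1
    ring
  have hint : ∀ n : ℕ, (∫ t, F n t ∂μ) = (I*(x:ℂ)*aiw)^n/(n.factorial:ℂ) *
      ((3^(((n:ℝ)-2)/3) * Real.Gamma (((n:ℝ)+1)/3) : ℝ) : ℂ) := by
    intro n
    simp_rw [hFeq]
    rw [MeasureTheory.integral_const_mul]
    congr 1
    rw [← aiK n]
    exact integral_ofReal
  simp_rw [hint, htsum] at hs2
  exact hs2

theorem stmt15 (x : ℝ) :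
    Tendsto (fun R : ℝ => ((∫ u in (0 : ℝ)..R, Real.cos (x * u + u ^ 3 / 3) : ℝ) : ℂ))
      atTop (nhds ((Real.pi : ℂ) * Ai (x : ℂ))) := by
  have hπ := Real.pi_pos
  set J := ∫ t in Ioi (0:ℝ), aiG x t with hJ
  set L := aiw * J with hLdef
  -- HasSum with cleaned-up terms
  have hI : I = Complex.exp ((Real.pi/2 : ℝ)*I) := by
    rw [Complex.exp_mul_I, ← Complex.ofReal_cos, ← Complex.ofReal_sin,
      Real.cos_pi_div_two, Real.sin_pi_div_two]
    simp
  have hL : HasSum (fun n : ℕ => Complex.exp (((Real.pi/6 + 2*Real.pi*n/3 : ℝ) : ℂ)*I) *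
      ((x^n * (3^(((n:ℝ)-2)/3) * Real.Gamma (((n:ℝ)+1)/3)) / n.factorial : ℝ) : ℂ)) L := by
    have h := (aiJ_hasSum x).mul_left aiw
    have he : ∀ n : ℕ, aiw * ((I*(x:ℂ)*aiw)^n/(n.factorial : ℂ) *
        ((3^(((n:ℝ)-2)/3) * Real.Gamma (((n:ℝ)+1)/3) : ℝ) : ℂ))
        = Complex.exp (((Real.pi/6 + 2*Real.pi*n/3 : ℝ) : ℂ)*I) *
          ((x^n * (3^(((n:ℝ)-2)/3) * Real.Gamma (((n:ℝ)+1)/3)) / n.factorial : ℝ) : ℂ) := by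
      intro n
      have hw : aiw * (I*aiw)^n = Complex.exp (((Real.pi/6 + 2*Real.pi*n/3 : ℝ) : ℂ)*I) := by
        have h1 : I*aiw = Complex.exp (((2*Real.pi/3 : ℝ) : ℂ)*I) := by
          nth_rewrite 1 [hI]
          rw [aiw, ← Complex.exp_add]
          congr 1
          push_cast
          ring
        rw [h1, ← Complex.exp_nat_mul, aiw, ← Complex.exp_add]
        congr 1
        push_cast
        ring
      have h2 : aiw * ((I*(x:ℂ)*aiw)^n/(n.factorial : ℂ) *
          ((3^(((n:ℝ)-2)/3) * Real.Gamma (((n:ℝ)+1)/3) : ℝ) : ℂ))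
          = (aiw * (I*aiw)^n) * (((x:ℂ))^n *
            ((3^(((n:ℝ)-2)/3) * Real.Gamma (((n:ℝ)+1)/3) : ℝ) : ℂ) / (n.factorial : ℂ)) := by
        rw [mul_pow, mul_pow]
        ring
      rw [h2, hw]
      congr 1
      push_cast
      ring
    exact (funext he) ▸ h
  have hre : HasSum (fun n : ℕ => Real.cos (Real.pi/6 + 2*Real.pi*n/3) *
      (x^n * (3^(((n:ℝ)-2)/3) * Real.Gamma (((n:ℝ)+1)/3)) / n.factorial)) L.re := by
    have h := hL.mapL Complex.reCLM
    simp only [Complex.reCLM_apply, Complex.mul_re, Complex.ofReal_re, Complex.ofReal_im,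
      Complex.exp_ofReal_mul_I_re, mul_zero, sub_zero] at h
    exact h
  have hr : HasSum (fun n : ℕ => Real.Gamma (((n:ℝ)+1)/3)/(n.factorial : ℝ) *
      Real.sin (2*((n:ℝ)+1)*Real.pi/3) * ((3:ℝ)^((1:ℝ)/3)*x)^n)
      ((3:ℝ)^((2:ℝ)/3) * L.re) := by
    have h := hre.mul_left ((3:ℝ)^((2:ℝ)/3))
    have he : ∀ n : ℕ, (3:ℝ)^((2:ℝ)/3) * (Real.cos (Real.pi/6 + 2*Real.pi*n/3) *
        (x^n * (3^(((n:ℝ)-2)/3) * Real.Gamma (((n:ℝ)+1)/3)) / n.factorial))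
        = Real.Gamma (((n:ℝ)+1)/3)/(n.factorial : ℝ) *
          Real.sin (2*((n:ℝ)+1)*Real.pi/3) * ((3:ℝ)^((1:ℝ)/3)*x)^n := by
      intro n
      have hsin : Real.sin (2*((n:ℝ)+1)*Real.pi/3) = Real.cos (Real.pi/6 + 2*Real.pi*n/3) := by
        rw [← Real.cos_pi_div_two_sub,
          show Real.pi/2 - 2*((n:ℝ)+1)*Real.pi/3 = -(Real.pi/6 + 2*Real.pi*n/3) by ring,
          Real.cos_neg]
      have hpow : ((3:ℝ)^((1:ℝ)/3)*x)^n = (3:ℝ)^(((n:ℝ))/3) * x^n := by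
        rw [mul_pow, ← Real.rpow_natCast ((3:ℝ)^((1:ℝ)/3)) n, ← Real.rpow_mul (by norm_num)]
        congr 2
        ring
      have h3 : (3:ℝ)^((2:ℝ)/3) * (3:ℝ)^(((n:ℝ)-2)/3) = (3:ℝ)^(((n:ℝ))/3) := by
        rw [← Real.rpow_add (by norm_num)]
        congr 1
        ring
      rw [hsin, hpow, ← h3]
      ring
    exact (funext he) ▸ h
  -- rewrite the target constant
  have hAi : (Real.pi : ℂ) * Ai (x : ℂ) = ((L.re : ℝ) : ℂ) := by
    rw [Ai]
    have htsum : (∑' n : ℕ,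
        ((Real.Gamma ((n + 1) / 3) / n.factorial * Real.sin (2 * (n + 1) * Real.pi / 3) : ℝ) : ℂ) *
          ((((3 : ℝ) ^ ((1 : ℝ) / 3) : ℝ) : ℂ) * (x:ℂ)) ^ n)
        = (((3:ℝ)^((2:ℝ)/3) * L.re : ℝ) : ℂ) := by
      rw [← (Complex.hasSum_ofReal.2 hr).tsum_eq]
      apply tsum_congr
      intro n
      push_cast
      ring
    rw [htsum]
    have h30 : (3:ℝ)^((2:ℝ)/3) ≠ 0 := by positivity
    have hreal : Real.pi * ((1 / ((3:ℝ)^((2:ℝ)/3) * Real.pi)) * ((3:ℝ)^((2:ℝ)/3) * L.re))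
        = L.re := by field_simp
    have hc : (Real.pi : ℂ) * (((1 / ((3:ℝ)^((2:ℝ)/3) * Real.pi)) : ℝ) : ℂ) *
        (((3:ℝ)^((2:ℝ)/3) * L.re : ℝ) : ℂ)
        = ((Real.pi * ((1 / ((3:ℝ)^((2:ℝ)/3) * Real.pi)) * ((3:ℝ)^((2:ℝ)/3) * L.re)) : ℝ) : ℂ) := by
      push_cast
      ring
    rw [← mul_assoc, hc, hreal]
  rw [hAi]
  -- relate the cosine integral to the real part of the complex integral
  have hcos : ∀ R : ℝ, ((∫ u in (0:ℝ)..R, Real.cos (x * u + u ^ 3 / 3) : ℝ) : ℂ)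
      = ((((∫ t in (0:ℝ)..R, aiF x t).re : ℝ)) : ℂ) := by
    intro R
    congr 1
    have h1 : ∀ u : ℝ, Real.cos (x * u + u ^ 3 / 3) = (aiF x u).re := by
      intro u
      rw [aiF, show I*((x:ℂ)*(u:ℂ) + (u:ℂ)^3/3) = ((x*u + u^3/3 : ℝ) : ℂ)*I by push_cast; ring,
        Complex.exp_ofReal_mul_I_re]
    rw [intervalIntegral.integral_congr (fun u _ => h1 u)]
    have h2 := Complex.reCLM.intervalIntegral_comp_comm
      (((aiF_continuous x).comp Complex.continuous_ofReal).intervalIntegrable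
        (μ := MeasureTheory.volume) 0 R)
    simp only [Complex.reCLM_apply, Function.comp] at h2
    exact h2
  simp only [hcos]
  exact (Complex.continuous_ofReal.tendsto _).comp
    ((Complex.continuous_re.tendsto _).comp (seg1_tendsto x))
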